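/- (Lemma 3.6, case (4,12).) For all nonnegative integers r and s, there exists a solution to HWP*(12; 4^r, 12^s) if and only if r + s = 11. -/
import Mathlib


/-- A solution to the directed Hamilton–Waterloo problem HWP*(v; m^r, n^s):
a family of `r + s` permutations of `Fin v`, the first `r` of which are
fixed-point-free with all cycles of length `m` (i.e. every point has minimal
period `m`), the last `s` fixed-point-free with all cycles of length `n`,
such that for every ordered pair of distinct vertices `(x, y)` there is exactly
one index `i` with `σ i x = y`. -/
def HWPStarSolution (v m n r s : ℕ) : Prop :=
  ∃ σ : Fin (r + s) → Equiv.Perm (Fin v),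
    (∀ i : Fin (r + s), (i : ℕ) < r → ∀ x : Fin v, Function.minimalPeriod ⇑(σ i) x = m) ∧
    (∀ i : Fin (r + s), r ≤ (i : ℕ) → ∀ x : Fin v, Function.minimalPeriod ⇑(σ i) x = n) ∧
    (∀ x y : Fin v, x ≠ y → ∃! i : Fin (r + s), σ i x = y)

private lemma minPeriod_eq_of {f : Fin 12 → Fin 12} {x : Fin 12} {n : ℕ} (hn : 0 < n)
    (hp : Function.IsPeriodicPt f n x)
    (hlt : ∀ m, m ∣ n → m < n → ¬ Function.IsPeriodicPt f m x) :
    Function.minimalPeriod f x = n := by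
  have hdvd := hp.minimalPeriod_dvd
  by_contra hne
  exact hlt _ hdvd (lt_of_le_of_ne (Nat.le_of_dvd hn hdvd) hne)
    (Function.isPeriodicPt_minimalPeriod f x)

private lemma minPeriod_four (σ : Equiv.Perm (Fin 12))
    (h : ∀ x : Fin 12, (⇑σ)^[4] x = x ∧ σ x ≠ x ∧ σ (σ x) ≠ x) (x : Fin 12) :
    Function.minimalPeriod ⇑σ x = 4 := by
  refine minPeriod_eq_of (by norm_num) (h x).1 ?_
  intro m hdvd hlt hper
  have hm : 1 ≤ m := Nat.pos_of_dvd_of_pos hdvd (by norm_num)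
  interval_cases m
  · exact (h x).2.1 hper
  · exact (h x).2.2 hper
  · norm_num at hdvd

private lemma minPeriod_twelve (σ : Equiv.Perm (Fin 12))
    (h : ∀ x : Fin 12, (⇑σ)^[12] x = x ∧ (⇑σ)^[4] x ≠ x ∧ (⇑σ)^[6] x ≠ x) (x : Fin 12) :
    Function.minimalPeriod ⇑σ x = 12 := by
  refine minPeriod_eq_of (by norm_num) (h x).1 ?_
  intro m hdvd hlt hper
  have hm : 1 ≤ m := Nat.pos_of_dvd_of_pos hdvd (by norm_num)
  interval_cases m
  · exact (h x).2.1 (hper.mul_const 4)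
  · exact (h x).2.1 (hper.mul_const 2)
  · exact (h x).2.2 (hper.mul_const 2)
  · exact (h x).2.1 hper
  · norm_num at hdvd
  · exact (h x).2.2 hper
  · norm_num at hdvd
  · norm_num at hdvd
  · norm_num at hdvd
  · norm_num at hdvd
  · norm_num at hdvd

private def mkP (f g : Fin 12 → Fin 12) (h1 : ∀ x, g (f x) = x) (h2 : ∀ x, f (g x) = x) :
    Equiv.Perm (Fin 12) := ⟨f, g, h1, h2⟩

private lemma cond4_of (k : ℕ) (σ : Fin 11 → Equiv.Perm (Fin 12))
    (H : ∀ i : Fin 11, (i : ℕ) < k → ∀ x : Fin 12,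
      (⇑(σ i))^[4] x = x ∧ σ i x ≠ x ∧ σ i (σ i x) ≠ x) :
    ∀ i : Fin 11, (i : ℕ) < k → ∀ x : Fin 12, Function.minimalPeriod ⇑(σ i) x = 4 :=
  fun i hi x => minPeriod_four (σ i) (H i hi) x

private lemma cond3_of (σ : Fin 11 → Equiv.Perm (Fin 12))
    (H : ∀ x y : Fin 12, x ≠ y → ∃ i : Fin 11, σ i x = y ∧ ∀ j : Fin 11, σ j x = y → j = i) :
    ∀ x y : Fin 12, x ≠ y → ∃! i : Fin 11, σ i x = y := H

private lemma cond12_of (k : ℕ) (σ : Fin 11 → Equiv.Perm (Fin 12))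
    (H : ∀ i : Fin 11, k ≤ (i : ℕ) → ∀ x : Fin 12,
      (⇑(σ i))^[12] x = x ∧ (⇑(σ i))^[4] x ≠ x ∧ (⇑(σ i))^[6] x ≠ x) :
    ∀ i : Fin 11, k ≤ (i : ℕ) → ∀ x : Fin 12, Function.minimalPeriod ⇑(σ i) x = 12 :=
  fun i hi x => minPeriod_twelve (σ i) (H i hi) x

set_option maxRecDepth 100000 in
private lemma sol0 : HWPStarSolution 12 4 12 0 11 :=
  ⟨(![mkP ![9, 0, 11, 8, 6, 1, 3, 5, 10, 2, 7, 4] ![1, 5, 9, 6, 11, 7, 4, 10, 3, 0, 8, 2] (by decide) (by decide),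
      mkP ![11, 2, 8, 6, 0, 4, 1, 3, 9, 10, 5, 7] ![4, 6, 1, 7, 5, 10, 3, 11, 2, 8, 9, 0] (by decide) (by decide),
      mkP ![7, 10, 4, 5, 9, 0, 2, 11, 6, 3, 8, 1] ![5, 11, 6, 9, 2, 3, 8, 0, 10, 4, 1, 7] (by decide) (by decide),
      mkP ![1, 6, 0, 11, 5, 9, 4, 10, 2, 7, 3, 8] ![2, 0, 8, 10, 6, 4, 1, 9, 11, 5, 7, 3] (by decide) (by decide),
      mkP ![10, 5, 6, 0, 2, 7, 11, 8, 3, 1, 4, 9] ![3, 9, 4, 8, 10, 1, 2, 5, 7, 11, 0, 6] (by decide) (by decide),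
      mkP ![8, 3, 9, 10, 7, 2, 0, 6, 1, 4, 11, 5] ![6, 8, 5, 1, 9, 11, 7, 4, 0, 2, 3, 10] (by decide) (by decide),
      mkP ![4, 11, 1, 9, 3, 10, 8, 2, 7, 5, 6, 0] ![11, 2, 7, 4, 0, 9, 10, 8, 6, 3, 5, 1] (by decide) (by decide),
      mkP ![5, 9, 3, 7, 1, 8, 10, 0, 4, 11, 2, 6] ![7, 4, 10, 2, 8, 0, 11, 3, 5, 1, 6, 9] (by decide) (by decide),
      mkP ![2, 7, 10, 1, 8, 11, 5, 4, 0, 6, 9, 3] ![8, 3, 0, 11, 7, 6, 9, 1, 4, 10, 2, 5] (by decide) (by decide),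
      mkP ![3, 8, 5, 4, 10, 6, 7, 9, 11, 0, 1, 2] ![9, 10, 11, 0, 3, 2, 5, 6, 1, 7, 4, 8] (by decide) (by decide),
      mkP ![6, 4, 7, 2, 11, 3, 9, 1, 5, 8, 0, 10] ![10, 7, 3, 5, 1, 8, 0, 2, 9, 6, 11, 4] (by decide) (by decide)] : Fin 11 → Equiv.Perm (Fin 12)),
   cond4_of _ _ (by decide), cond12_of _ _ (by decide), cond3_of _ (by decide)⟩

set_option maxRecDepth 100000 in
private lemma sol1 : HWPStarSolution 12 4 12 1 10 :=
  ⟨(![mkP ![8, 10, 6, 5, 11, 4, 7, 9, 1, 2, 0, 3] ![10, 8, 9, 11, 5, 3, 2, 6, 0, 7, 1, 4] (by decide) (by decide),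
      mkP ![2, 5, 1, 6, 0, 8, 9, 3, 7, 11, 4, 10] ![4, 2, 0, 7, 10, 1, 3, 8, 5, 6, 11, 9] (by decide) (by decide),
      mkP ![11, 9, 7, 0, 1, 3, 5, 10, 4, 6, 8, 2] ![3, 4, 11, 5, 8, 6, 9, 2, 10, 1, 7, 0] (by decide) (by decide),
      mkP ![3, 2, 4, 10, 6, 1, 11, 8, 0, 5, 9, 7] ![8, 5, 1, 0, 2, 9, 4, 11, 7, 10, 3, 6] (by decide) (by decide),
      mkP ![7, 3, 10, 2, 8, 9, 1, 11, 6, 0, 5, 4] ![9, 6, 3, 1, 11, 10, 8, 0, 4, 5, 2, 7] (by decide) (by decide),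
      mkP ![1, 7, 0, 9, 10, 6, 3, 4, 2, 8, 11, 5] ![2, 0, 8, 6, 7, 11, 5, 1, 9, 3, 4, 10] (by decide) (by decide),
      mkP ![4, 8, 3, 7, 5, 11, 0, 6, 9, 10, 2, 1] ![6, 11, 10, 2, 0, 4, 7, 3, 1, 8, 9, 5] (by decide) (by decide),
      mkP ![6, 4, 9, 11, 7, 2, 10, 0, 5, 1, 3, 8] ![7, 9, 5, 10, 1, 8, 0, 4, 11, 2, 6, 3] (by decide) (by decide),
      mkP ![9, 0, 5, 8, 3, 10, 2, 1, 11, 4, 7, 6] ![1, 7, 6, 4, 9, 2, 11, 10, 3, 0, 5, 8] (by decide) (by decide),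
      mkP ![5, 11, 8, 1, 9, 7, 4, 2, 10, 3, 6, 0] ![11, 3, 7, 9, 6, 0, 10, 5, 2, 4, 8, 1] (by decide) (by decide),
      mkP ![10, 6, 11, 4, 2, 0, 8, 5, 3, 7, 1, 9] ![5, 10, 4, 8, 3, 7, 1, 9, 6, 11, 0, 2] (by decide) (by decide)] : Fin 11 → Equiv.Perm (Fin 12)),
   cond4_of _ _ (by decide), cond12_of _ _ (by decide), cond3_of _ (by decide)⟩

set_option maxRecDepth 100000 in
private lemma sol2 : HWPStarSolution 12 4 12 2 9 :=
  ⟨(![mkP ![3, 9, 10, 8, 2, 4, 0, 1, 6, 11, 5, 7] ![6, 7, 4, 0, 5, 10, 8, 11, 3, 1, 2, 9] (by decide) (by decide),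
      mkP ![5, 6, 8, 4, 9, 10, 2, 3, 1, 7, 11, 0] ![11, 8, 6, 7, 3, 0, 1, 9, 2, 4, 5, 10] (by decide) (by decide),
      mkP ![8, 10, 4, 1, 0, 11, 5, 6, 9, 3, 7, 2] ![4, 3, 11, 9, 2, 6, 7, 10, 0, 8, 1, 5] (by decide) (by decide),
      mkP ![9, 4, 11, 0, 7, 2, 1, 5, 10, 8, 6, 3] ![3, 6, 5, 11, 1, 7, 10, 4, 9, 0, 8, 2] (by decide) (by decide),
      mkP ![4, 8, 5, 11, 6, 3, 7, 2, 0, 1, 9, 10] ![8, 9, 7, 5, 0, 2, 4, 6, 1, 10, 11, 3] (by decide) (by decide),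
      mkP ![6, 0, 7, 5, 3, 9, 4, 10, 11, 2, 8, 1] ![1, 11, 9, 4, 6, 3, 0, 2, 10, 5, 7, 8] (by decide) (by decide),
      mkP ![7, 2, 0, 9, 1, 8, 10, 11, 4, 5, 3, 6] ![2, 4, 1, 10, 8, 9, 11, 0, 5, 3, 6, 7] (by decide) (by decide),
      mkP ![1, 7, 6, 2, 5, 0, 11, 8, 3, 10, 4, 9] ![5, 0, 3, 8, 10, 4, 2, 1, 7, 11, 9, 6] (by decide) (by decide),
      mkP ![10, 5, 3, 7, 11, 6, 9, 0, 2, 4, 1, 8] ![7, 10, 8, 2, 9, 1, 5, 3, 11, 6, 0, 4] (by decide) (by decide),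
      mkP ![11, 3, 9, 6, 10, 1, 8, 4, 7, 0, 2, 5] ![9, 5, 10, 1, 7, 11, 3, 8, 6, 2, 4, 0] (by decide) (by decide),
      mkP ![2, 11, 1, 10, 8, 7, 3, 9, 5, 6, 0, 4] ![10, 2, 0, 6, 11, 8, 9, 5, 4, 7, 3, 1] (by decide) (by decide)] : Fin 11 → Equiv.Perm (Fin 12)),
   cond4_of _ _ (by decide), cond12_of _ _ (by decide), cond3_of _ (by decide)⟩

set_option maxRecDepth 100000 in
private lemma sol3 : HWPStarSolution 12 4 12 3 8 :=
  ⟨(![mkP ![10, 6, 9, 5, 11, 0, 2, 8, 4, 1, 3, 7] ![5, 9, 6, 10, 8, 3, 1, 11, 7, 2, 0, 4] (by decide) (by decide),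
      mkP ![8, 2, 11, 6, 7, 4, 0, 9, 3, 5, 1, 10] ![6, 10, 1, 8, 5, 9, 3, 4, 0, 7, 11, 2] (by decide) (by decide),
      mkP ![5, 0, 8, 10, 2, 7, 11, 1, 9, 4, 6, 3] ![1, 7, 4, 11, 9, 0, 10, 5, 2, 8, 3, 6] (by decide) (by decide),
      mkP ![4, 3, 10, 7, 9, 11, 5, 6, 1, 8, 0, 2] ![10, 8, 11, 1, 0, 6, 7, 3, 9, 4, 2, 5] (by decide) (by decide),
      mkP ![11, 8, 1, 2, 5, 6, 3, 0, 10, 7, 9, 4] ![7, 2, 3, 6, 11, 4, 5, 9, 1, 10, 8, 0] (by decide) (by decide),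
      mkP ![2, 9, 7, 11, 1, 8, 10, 3, 6, 0, 4, 5] ![9, 4, 0, 7, 10, 11, 8, 2, 5, 1, 6, 3] (by decide) (by decide),
      mkP ![9, 11, 0, 1, 10, 2, 4, 5, 7, 3, 8, 6] ![2, 3, 5, 9, 6, 7, 11, 8, 10, 0, 4, 1] (by decide) (by decide),
      mkP ![7, 4, 5, 0, 3, 9, 1, 10, 2, 6, 11, 8] ![3, 6, 8, 4, 1, 2, 9, 0, 11, 5, 7, 10] (by decide) (by decide),
      mkP ![6, 7, 3, 4, 8, 1, 9, 11, 5, 10, 2, 0] ![11, 5, 10, 2, 3, 8, 0, 1, 4, 6, 9, 7] (by decide) (by decide),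
      mkP ![3, 5, 4, 9, 6, 10, 8, 2, 0, 11, 7, 1] ![8, 11, 7, 0, 2, 1, 4, 10, 6, 3, 5, 9] (by decide) (by decide),
      mkP ![1, 10, 6, 8, 0, 3, 7, 4, 11, 2, 5, 9] ![4, 0, 9, 5, 7, 10, 2, 6, 3, 11, 1, 8] (by decide) (by decide)] : Fin 11 → Equiv.Perm (Fin 12)),
   cond4_of _ _ (by decide), cond12_of _ _ (by decide), cond3_of _ (by decide)⟩

set_option maxRecDepth 100000 in
private lemma sol4 : HWPStarSolution 12 4 12 4 7 :=
  ⟨(![mkP ![9, 7, 10, 5, 11, 4, 8, 0, 2, 1, 6, 3] ![7, 9, 8, 11, 5, 3, 10, 1, 6, 0, 2, 4] (by decide) (by decide),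
      mkP ![5, 0, 4, 8, 7, 10, 2, 6, 11, 3, 1, 9] ![1, 10, 6, 9, 2, 0, 7, 4, 3, 11, 5, 8] (by decide) (by decide),
      mkP ![3, 6, 8, 2, 10, 11, 5, 4, 0, 7, 9, 1] ![8, 11, 3, 0, 7, 6, 1, 9, 2, 10, 4, 5] (by decide) (by decide),
      mkP ![2, 5, 11, 9, 3, 8, 0, 1, 7, 10, 4, 6] ![6, 7, 0, 4, 10, 1, 11, 8, 5, 3, 9, 2] (by decide) (by decide),
      mkP ![11, 3, 7, 0, 5, 9, 1, 10, 6, 2, 8, 4] ![3, 6, 9, 1, 11, 4, 8, 2, 10, 5, 7, 0] (by decide) (by decide),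
      mkP ![8, 4, 3, 1, 6, 7, 10, 9, 5, 11, 0, 2] ![10, 3, 11, 2, 1, 8, 4, 5, 0, 7, 6, 9] (by decide) (by decide),
      mkP ![10, 9, 6, 11, 1, 2, 7, 8, 4, 0, 3, 5] ![9, 4, 5, 10, 8, 11, 2, 6, 7, 1, 0, 3] (by decide) (by decide),
      mkP ![7, 11, 1, 10, 9, 6, 4, 5, 3, 8, 2, 0] ![11, 2, 10, 8, 6, 7, 5, 0, 9, 4, 3, 1] (by decide) (by decide),
      mkP ![4, 2, 9, 7, 8, 0, 3, 11, 1, 6, 5, 10] ![5, 8, 1, 6, 0, 10, 9, 3, 4, 2, 11, 7] (by decide) (by decide),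
      mkP ![1, 8, 5, 6, 0, 3, 9, 2, 10, 4, 11, 7] ![4, 0, 7, 5, 9, 2, 3, 11, 1, 6, 8, 10] (by decide) (by decide),
      mkP ![6, 10, 0, 4, 2, 1, 11, 3, 9, 5, 7, 8] ![2, 5, 4, 7, 3, 9, 0, 10, 11, 8, 1, 6] (by decide) (by decide)] : Fin 11 → Equiv.Perm (Fin 12)),
   cond4_of _ _ (by decide), cond12_of _ _ (by decide), cond3_of _ (by decide)⟩

set_option maxRecDepth 100000 in
private lemma sol5 : HWPStarSolution 12 4 12 5 6 :=
  ⟨(![mkP ![2, 10, 8, 1, 0, 6, 7, 9, 4, 5, 11, 3] ![4, 3, 0, 11, 8, 9, 5, 6, 2, 7, 1, 10] (by decide) (by decide),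
      mkP ![4, 5, 1, 2, 10, 3, 11, 8, 6, 0, 9, 7] ![9, 2, 3, 5, 0, 1, 8, 11, 7, 10, 4, 6] (by decide) (by decide),
      mkP ![7, 3, 6, 11, 1, 10, 9, 5, 2, 8, 0, 4] ![10, 4, 8, 1, 11, 7, 2, 0, 9, 6, 5, 3] (by decide) (by decide),
      mkP ![1, 4, 7, 10, 8, 9, 5, 3, 0, 11, 2, 6] ![8, 0, 10, 7, 1, 6, 11, 2, 4, 5, 3, 9] (by decide) (by decide),
      mkP ![11, 8, 3, 0, 9, 4, 1, 6, 7, 10, 5, 2] ![3, 6, 11, 2, 5, 10, 7, 8, 1, 4, 9, 0] (by decide) (by decide),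
      mkP ![5, 7, 10, 6, 2, 11, 0, 4, 9, 1, 3, 8] ![6, 9, 4, 10, 7, 0, 3, 1, 11, 8, 2, 5] (by decide) (by decide),
      mkP ![6, 11, 4, 9, 7, 8, 10, 0, 3, 2, 1, 5] ![7, 10, 9, 8, 2, 11, 0, 4, 5, 3, 6, 1] (by decide) (by decide),
      mkP ![8, 9, 11, 7, 5, 0, 3, 2, 1, 6, 4, 10] ![5, 8, 7, 6, 10, 4, 9, 3, 0, 1, 11, 2] (by decide) (by decide),
      mkP ![9, 6, 0, 5, 3, 2, 4, 10, 11, 7, 8, 1] ![2, 11, 5, 4, 6, 3, 1, 9, 10, 0, 7, 8] (by decide) (by decide),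
      mkP ![3, 0, 5, 8, 6, 1, 2, 11, 10, 4, 7, 9] ![1, 5, 6, 0, 9, 2, 4, 10, 3, 11, 8, 7] (by decide) (by decide),
      mkP ![10, 2, 9, 4, 11, 7, 8, 1, 5, 3, 6, 0] ![11, 7, 1, 9, 3, 8, 10, 5, 6, 2, 0, 4] (by decide) (by decide)] : Fin 11 → Equiv.Perm (Fin 12)),
   cond4_of _ _ (by decide), cond12_of _ _ (by decide), cond3_of _ (by decide)⟩

set_option maxRecDepth 100000 in
private lemma sol6 : HWPStarSolution 12 4 12 6 5 :=
  ⟨(![mkP ![4, 7, 8, 10, 1, 9, 2, 0, 11, 3, 5, 6] ![7, 4, 6, 9, 0, 10, 11, 1, 2, 5, 3, 8] (by decide) (by decide),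
      mkP ![8, 6, 11, 5, 10, 1, 3, 9, 4, 2, 0, 7] ![10, 5, 9, 6, 8, 3, 1, 11, 0, 7, 4, 2] (by decide) (by decide),
      mkP ![10, 5, 0, 11, 7, 6, 9, 3, 2, 1, 8, 4] ![2, 9, 8, 7, 11, 1, 5, 4, 10, 6, 0, 3] (by decide) (by decide),
      mkP ![6, 10, 1, 2, 11, 8, 5, 4, 0, 7, 3, 9] ![8, 2, 3, 10, 7, 6, 0, 9, 5, 11, 1, 4] (by decide) (by decide),
      mkP ![2, 3, 9, 8, 0, 10, 11, 1, 7, 4, 6, 5] ![4, 7, 0, 1, 9, 11, 10, 8, 3, 2, 5, 6] (by decide) (by decide),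
      mkP ![7, 8, 4, 0, 6, 3, 10, 5, 9, 11, 2, 1] ![3, 11, 10, 5, 2, 7, 4, 0, 1, 8, 6, 9] (by decide) (by decide),
      mkP ![1, 11, 7, 9, 3, 2, 0, 10, 5, 6, 4, 8] ![6, 0, 5, 4, 10, 8, 9, 2, 11, 3, 7, 1] (by decide) (by decide),
      mkP ![11, 4, 10, 1, 8, 0, 7, 2, 6, 5, 9, 3] ![5, 3, 7, 11, 1, 9, 8, 6, 4, 10, 2, 0] (by decide) (by decide),
      mkP ![5, 9, 6, 7, 2, 4, 8, 11, 3, 0, 1, 10] ![9, 10, 4, 8, 5, 0, 2, 3, 6, 1, 11, 7] (by decide) (by decide),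
      mkP ![3, 0, 5, 6, 9, 7, 4, 8, 1, 10, 11, 2] ![1, 8, 11, 0, 6, 2, 3, 5, 7, 4, 9, 10] (by decide) (by decide),
      mkP ![9, 2, 3, 4, 5, 11, 1, 6, 10, 8, 7, 0] ![11, 6, 1, 2, 3, 4, 7, 10, 9, 0, 8, 5] (by decide) (by decide)] : Fin 11 → Equiv.Perm (Fin 12)),
   cond4_of _ _ (by decide), cond12_of _ _ (by decide), cond3_of _ (by decide)⟩

set_option maxRecDepth 100000 in
private lemma sol7 : HWPStarSolution 12 4 12 7 4 :=
  ⟨(![mkP ![6, 2, 10, 9, 7, 11, 5, 3, 1, 4, 8, 0] ![11, 8, 1, 7, 9, 6, 0, 4, 10, 3, 2, 5] (by decide) (by decide),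
      mkP ![2, 6, 11, 5, 1, 7, 8, 10, 4, 0, 3, 9] ![9, 4, 0, 10, 8, 3, 1, 5, 6, 11, 7, 2] (by decide) (by decide),
      mkP ![10, 4, 7, 6, 0, 2, 9, 11, 3, 8, 1, 5] ![4, 10, 5, 8, 1, 11, 3, 2, 9, 6, 0, 7] (by decide) (by decide),
      mkP ![8, 10, 6, 0, 11, 4, 1, 5, 9, 3, 2, 7] ![3, 6, 10, 9, 5, 7, 2, 11, 0, 8, 1, 4] (by decide) (by decide),
      mkP ![7, 9, 3, 1, 6, 8, 0, 4, 11, 2, 5, 10] ![6, 3, 9, 2, 7, 10, 4, 0, 5, 1, 11, 8] (by decide) (by decide),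
      mkP ![11, 7, 0, 10, 3, 1, 4, 9, 2, 5, 6, 8] ![2, 5, 8, 4, 6, 9, 10, 1, 11, 7, 3, 0] (by decide) (by decide),
      mkP ![1, 8, 5, 7, 9, 3, 11, 2, 10, 6, 0, 4] ![10, 0, 7, 5, 11, 2, 9, 3, 1, 4, 8, 6] (by decide) (by decide),
      mkP ![9, 3, 4, 8, 5, 10, 2, 0, 6, 11, 7, 1] ![7, 11, 6, 1, 2, 4, 8, 10, 3, 0, 5, 9] (by decide) (by decide),
      mkP ![5, 11, 8, 4, 10, 6, 3, 1, 0, 7, 9, 2] ![8, 7, 11, 6, 3, 0, 5, 9, 2, 10, 4, 1] (by decide) (by decide),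
      mkP ![3, 0, 1, 11, 2, 9, 7, 8, 5, 10, 4, 6] ![1, 2, 4, 0, 10, 8, 11, 6, 7, 5, 9, 3] (by decide) (by decide),
      mkP ![4, 5, 9, 2, 8, 0, 10, 6, 7, 1, 11, 3] ![5, 9, 3, 11, 0, 1, 7, 8, 4, 2, 6, 10] (by decide) (by decide)] : Fin 11 → Equiv.Perm (Fin 12)),
   cond4_of _ _ (by decide), cond12_of _ _ (by decide), cond3_of _ (by decide)⟩

set_option maxRecDepth 100000 in
private lemma sol8 : HWPStarSolution 12 4 12 8 3 :=
  ⟨(![mkP ![7, 5, 1, 10, 6, 8, 0, 4, 2, 11, 9, 3] ![6, 2, 8, 11, 7, 1, 4, 0, 5, 10, 3, 9] (by decide) (by decide),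
      mkP ![3, 11, 5, 9, 2, 6, 4, 0, 10, 7, 1, 8] ![7, 10, 4, 0, 6, 2, 5, 9, 11, 3, 8, 1] (by decide) (by decide),
      mkP ![4, 9, 11, 8, 3, 7, 2, 1, 0, 5, 6, 10] ![8, 7, 6, 4, 0, 9, 10, 5, 3, 1, 11, 2] (by decide) (by decide),
      mkP ![8, 10, 3, 4, 11, 9, 1, 6, 5, 0, 7, 2] ![9, 6, 11, 2, 3, 8, 7, 10, 0, 5, 1, 4] (by decide) (by decide),
      mkP ![9, 7, 4, 6, 0, 1, 10, 11, 3, 2, 8, 5] ![4, 5, 9, 8, 2, 11, 3, 1, 10, 0, 6, 7] (by decide) (by decide),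
      mkP ![5, 6, 10, 7, 1, 2, 11, 8, 9, 3, 0, 4] ![10, 4, 5, 9, 11, 0, 1, 3, 7, 8, 2, 6] (by decide) (by decide),
      mkP ![6, 2, 8, 0, 9, 4, 7, 3, 11, 10, 5, 1] ![3, 11, 1, 7, 5, 10, 0, 6, 2, 4, 9, 8] (by decide) (by decide),
      mkP ![10, 0, 6, 1, 5, 11, 8, 2, 7, 4, 3, 9] ![1, 3, 7, 10, 9, 4, 2, 8, 6, 11, 0, 5] (by decide) (by decide),
      mkP ![2, 4, 9, 5, 7, 0, 3, 10, 1, 8, 11, 6] ![5, 8, 0, 6, 1, 3, 11, 4, 9, 2, 7, 10] (by decide) (by decide),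
      mkP ![11, 3, 0, 2, 8, 10, 9, 5, 6, 1, 4, 7] ![2, 9, 3, 1, 10, 7, 8, 11, 4, 6, 5, 0] (by decide) (by decide),
      mkP ![1, 8, 7, 11, 10, 3, 5, 9, 4, 6, 2, 0] ![11, 0, 10, 5, 8, 6, 9, 2, 1, 7, 4, 3] (by decide) (by decide)] : Fin 11 → Equiv.Perm (Fin 12)),
   cond4_of _ _ (by decide), cond12_of _ _ (by decide), cond3_of _ (by decide)⟩

set_option maxRecDepth 100000 in
private lemma sol9 : HWPStarSolution 12 4 12 9 2 :=
  ⟨(![mkP ![8, 0, 5, 11, 3, 6, 9, 4, 10, 2, 1, 7] ![1, 10, 9, 4, 7, 2, 5, 11, 0, 6, 8, 3] (by decide) (by decide),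
      mkP ![1, 5, 8, 4, 6, 10, 7, 3, 9, 11, 0, 2] ![10, 0, 11, 7, 3, 1, 4, 6, 2, 8, 5, 9] (by decide) (by decide),
      mkP ![11, 10, 9, 6, 0, 1, 2, 5, 4, 3, 7, 8] ![4, 5, 6, 9, 8, 7, 3, 10, 11, 2, 1, 0] (by decide) (by decide),
      mkP ![6, 8, 4, 7, 9, 0, 11, 1, 3, 10, 2, 5] ![5, 7, 10, 8, 2, 11, 0, 3, 1, 4, 9, 6] (by decide) (by decide),
      mkP ![4, 6, 1, 0, 11, 2, 5, 10, 7, 8, 9, 3] ![3, 2, 5, 11, 0, 6, 1, 8, 9, 10, 7, 4] (by decide) (by decide),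
      mkP ![10, 4, 6, 8, 2, 7, 1, 11, 0, 5, 3, 9] ![8, 6, 4, 10, 1, 9, 2, 5, 3, 11, 0, 7] (by decide) (by decide),
      mkP ![9, 2, 0, 10, 7, 4, 3, 8, 5, 1, 11, 6] ![2, 9, 1, 6, 5, 8, 11, 4, 7, 0, 3, 10] (by decide) (by decide),
      mkP ![2, 3, 7, 9, 1, 8, 0, 6, 11, 4, 5, 10] ![6, 4, 0, 1, 9, 10, 7, 2, 5, 3, 11, 8] (by decide) (by decide),
      mkP ![3, 7, 11, 5, 8, 9, 10, 2, 6, 0, 4, 1] ![9, 11, 7, 0, 10, 3, 8, 1, 4, 5, 6, 2] (by decide) (by decide),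
      mkP ![7, 11, 10, 2, 5, 3, 4, 9, 1, 6, 8, 0] ![11, 8, 3, 5, 6, 4, 9, 0, 10, 7, 2, 1] (by decide) (by decide),
      mkP ![5, 9, 3, 1, 10, 11, 8, 0, 2, 7, 6, 4] ![7, 3, 8, 2, 11, 0, 10, 9, 6, 1, 4, 5] (by decide) (by decide)] : Fin 11 → Equiv.Perm (Fin 12)),
   cond4_of _ _ (by decide), cond12_of _ _ (by decide), cond3_of _ (by decide)⟩

set_option maxRecDepth 100000 in
private lemma sol10 : HWPStarSolution 12 4 12 10 1 :=
  ⟨(![mkP ![1, 4, 0, 6, 2, 3, 10, 9, 11, 8, 5, 7] ![2, 0, 4, 5, 1, 10, 3, 11, 9, 7, 6, 8] (by decide) (by decide),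
      mkP ![4, 11, 10, 2, 9, 1, 3, 0, 5, 7, 6, 8] ![7, 5, 3, 6, 0, 8, 10, 9, 11, 4, 2, 1] (by decide) (by decide),
      mkP ![5, 6, 4, 8, 0, 2, 7, 10, 9, 11, 1, 3] ![4, 10, 5, 11, 2, 0, 1, 6, 3, 8, 7, 9] (by decide) (by decide),
      mkP ![9, 5, 3, 0, 10, 7, 4, 11, 6, 2, 8, 1] ![3, 11, 9, 2, 6, 1, 8, 5, 10, 0, 4, 7] (by decide) (by decide),
      mkP ![6, 8, 5, 7, 11, 0, 2, 1, 3, 4, 9, 10] ![5, 7, 6, 8, 9, 2, 0, 3, 1, 10, 11, 4] (by decide) (by decide),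
      mkP ![10, 2, 7, 9, 3, 4, 0, 8, 1, 5, 11, 6] ![6, 8, 1, 4, 5, 9, 11, 2, 7, 3, 0, 10] (by decide) (by decide),
      mkP ![11, 0, 1, 4, 5, 9, 8, 6, 10, 3, 7, 2] ![1, 2, 11, 9, 3, 4, 7, 10, 6, 5, 8, 0] (by decide) (by decide),
      mkP ![2, 9, 6, 5, 1, 8, 11, 3, 7, 10, 4, 0] ![11, 4, 0, 7, 10, 3, 2, 8, 5, 1, 9, 6] (by decide) (by decide),
      mkP ![3, 10, 8, 1, 7, 11, 5, 2, 4, 6, 0, 9] ![10, 3, 7, 0, 8, 6, 9, 4, 2, 11, 1, 5] (by decide) (by decide),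
      mkP ![8, 7, 9, 11, 6, 10, 1, 4, 2, 0, 3, 5] ![9, 6, 8, 10, 7, 11, 4, 1, 0, 2, 5, 3] (by decide) (by decide),
      mkP ![7, 3, 11, 10, 8, 6, 9, 5, 0, 1, 2, 4] ![8, 9, 10, 1, 11, 7, 5, 0, 4, 6, 3, 2] (by decide) (by decide)] : Fin 11 → Equiv.Perm (Fin 12)),
   cond4_of _ _ (by decide), cond12_of _ _ (by decide), cond3_of _ (by decide)⟩

set_option maxRecDepth 100000 in
private lemma sol11 : HWPStarSolution 12 4 12 11 0 :=
  ⟨(![mkP ![11, 9, 4, 0, 10, 2, 8, 3, 1, 6, 5, 7] ![3, 8, 5, 7, 2, 10, 9, 11, 6, 1, 4, 0] (by decide) (by decide),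
      mkP ![4, 11, 8, 6, 1, 3, 7, 5, 10, 2, 9, 0] ![11, 4, 9, 5, 0, 7, 3, 6, 2, 10, 8, 1] (by decide) (by decide),
      mkP ![8, 7, 9, 1, 0, 6, 2, 10, 11, 5, 3, 4] ![4, 3, 6, 10, 11, 9, 5, 1, 0, 2, 7, 8] (by decide) (by decide),
      mkP ![10, 4, 5, 2, 6, 8, 11, 9, 3, 0, 7, 1] ![9, 11, 3, 8, 1, 2, 4, 10, 5, 7, 0, 6] (by decide) (by decide),
      mkP ![1, 3, 11, 7, 5, 10, 4, 0, 2, 8, 6, 9] ![7, 0, 8, 1, 6, 4, 10, 3, 9, 11, 5, 2] (by decide) (by decide),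
      mkP ![2, 8, 1, 11, 7, 9, 10, 6, 0, 3, 4, 5] ![8, 2, 0, 9, 10, 11, 7, 4, 1, 5, 6, 3] (by decide) (by decide),
      mkP ![6, 2, 0, 9, 8, 7, 1, 4, 5, 10, 11, 3] ![2, 6, 1, 11, 7, 8, 0, 5, 4, 3, 9, 10] (by decide) (by decide),
      mkP ![7, 10, 3, 5, 2, 4, 9, 1, 6, 11, 0, 8] ![10, 7, 4, 2, 5, 3, 8, 0, 11, 6, 1, 9] (by decide) (by decide),
      mkP ![5, 6, 7, 8, 3, 1, 0, 11, 9, 4, 2, 10] ![6, 5, 10, 4, 9, 0, 1, 2, 3, 8, 11, 7] (by decide) (by decide),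
      mkP ![3, 0, 6, 10, 9, 11, 5, 8, 4, 7, 1, 2] ![1, 10, 11, 0, 8, 6, 2, 9, 7, 4, 3, 5] (by decide) (by decide),
      mkP ![9, 5, 10, 4, 11, 0, 3, 2, 7, 1, 8, 6] ![5, 9, 7, 6, 3, 1, 11, 8, 10, 0, 2, 4] (by decide) (by decide)] : Fin 11 → Equiv.Perm (Fin 12)),
   cond4_of _ _ (by decide), cond12_of _ _ (by decide), cond3_of _ (by decide)⟩

set_option maxRecDepth 100000 in
/-- HWP*(12; 4^r, 12^s) has a solution if and only if r + s = 11. -/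
theorem hwpStar_12_4_12 (r s : ℕ) :
    HWPStarSolution 12 4 12 r s ↔ r + s = 11 := by
  constructor
  · rintro ⟨σ, h1, h2, h3⟩
    have hff : ∀ (i : Fin (r + s)) (x : Fin 12), σ i x ≠ x := by
      intro i x hfix
      have hp : Function.IsPeriodicPt ⇑(σ i) 1 x := hfix
      have hd := Nat.dvd_one.mp hp.minimalPeriod_dvd
      rcases lt_or_ge (i : ℕ) r with hi | hi
      · have := h1 i hi x; omega
      · have := h2 i hi x; omega
    have hbij : Function.Bijective (fun p : Fin (r + s) × Fin 12 =>
        (⟨(p.2, σ p.1 p.2), (hff p.1 p.2).symm⟩ :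
          {q : Fin 12 × Fin 12 // q.1 ≠ q.2})) := by
      constructor
      · rintro ⟨i, x⟩ ⟨j, y⟩ hEq
        simp only [Subtype.mk.injEq, Prod.mk.injEq] at hEq
        obtain ⟨rfl, hσ⟩ := hEq
        obtain ⟨k, -, hu⟩ := h3 x (σ i x) (hff i x).symm
        have hij : i = j := (hu i rfl).trans (hu j hσ.symm).symm
        rw [hij]
      · rintro ⟨⟨x, y⟩, hxy⟩
        obtain ⟨i, hi, -⟩ := h3 x y hxy
        exact ⟨(i, x), Subtype.ext (by simp [hi])⟩
    have hcard := Fintype.card_of_bijective hbij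
    have h132 : Fintype.card {q : Fin 12 × Fin 12 // q.1 ≠ q.2} = 132 := by decide
    simp only [Fintype.card_prod, Fintype.card_fin, h132] at hcard
    omega
  · intro h
    have hr : r ≤ 11 := by omega
    have hs : s = 11 - r := by omega
    subst hs
    interval_cases r
    exacts [sol0, sol1, sol2, sol3, sol4, sol5, sol6, sol7, sol8, sol9, sol10, sol11]
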